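/- arXiv:2603.17650 — 2 statements merged into one kernel-verified Lean document; each statement's English description precedes it below -/
import Mathlib

section
/- Let α ∈ ℝ and let f_α : ℝ² \ {0} → ℝ be given by f_α(x₁,x₂) = (x₁² + x₂²)^{α/2}. Then for every x ≠ 0, ∑_{i,j=1}^{2} [ (∂²f_α/∂x_i²)(x)·(∂f_α/∂x_j)(x)² + 2·(∂f_α/∂x_i)(x)·(∂f_α/∂x_j)(x)·(∂²f_α/∂x_i∂x_j)(x) ] = α³(3α − 2)·(x₁² + x₂²)^{(3α−4)/2}. Consequently, f_α satisfies the symphonic equation on all of ℝ² \ {0} if and only if α = 0 or α = 2/3. -/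
open scoped BigOperators
open Filter

/-- Partial derivative `∂f/∂x_i` of a scalar function on `ℝ^m`. -/
noncomputable def pd1 {m : ℕ} (f : (Fin m → ℝ) → ℝ) (i : Fin m) (x : Fin m → ℝ) : ℝ :=
  fderiv ℝ f x (Pi.single i 1)

namespace SymphAux

noncomputable def D2 (x : Fin 2 → ℝ) : (Fin 2 → ℝ) →L[ℝ] ℝ :=
  (2 * x 0) • ContinuousLinearMap.proj 0 + (2 * x 1) • ContinuousLinearMap.proj 1

lemma hasFDerivAt_S (x : Fin 2 → ℝ) :
    HasFDerivAt (fun y : Fin 2 → ℝ => y 0 ^ 2 + y 1 ^ 2) (D2 x) x := by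
  have h0 : HasFDerivAt (fun y : Fin 2 → ℝ => y 0)
      (ContinuousLinearMap.proj 0 : (Fin 2 → ℝ) →L[ℝ] ℝ) x :=
    (ContinuousLinearMap.proj 0 : (Fin 2 → ℝ) →L[ℝ] ℝ).hasFDerivAt
  have h1 : HasFDerivAt (fun y : Fin 2 → ℝ => y 1)
      (ContinuousLinearMap.proj 1 : (Fin 2 → ℝ) →L[ℝ] ℝ) x :=
    (ContinuousLinearMap.proj 1 : (Fin 2 → ℝ) →L[ℝ] ℝ).hasFDerivAt
  have h := (h0.mul h0).add (h1.mul h1)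
  have hfun : (fun y : Fin 2 → ℝ => y 0 ^ 2 + y 1 ^ 2) = fun y => y 0 * y 0 + y 1 * y 1 := by
    funext y; ring
  rw [hfun]
  refine h.congr_fderiv ?_
  unfold D2
  ext v
  simp
  ring

lemma hasFDerivAt_Sp (p : ℝ) {x : Fin 2 → ℝ} (hx : 0 < x 0 ^ 2 + x 1 ^ 2) :
    HasFDerivAt (fun y : Fin 2 → ℝ => (y 0 ^ 2 + y 1 ^ 2) ^ p)
      ((p * (x 0 ^ 2 + x 1 ^ 2) ^ (p - 1)) • D2 x) x := by
  have h := Real.hasDerivAt_rpow_const (x := x 0 ^ 2 + x 1 ^ 2) (p := p) (Or.inl hx.ne')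
  exact h.comp_hasFDerivAt x (hasFDerivAt_S x)

lemma D2_apply (x : Fin 2 → ℝ) (j : Fin 2) : D2 x (Pi.single j 1) = 2 * x j := by
  fin_cases j <;> simp [D2, Pi.single_apply]

lemma pd1_rpow (p : ℝ) {x : Fin 2 → ℝ} (hx : 0 < x 0 ^ 2 + x 1 ^ 2) (i : Fin 2) :
    pd1 (fun y : Fin 2 → ℝ => (y 0 ^ 2 + y 1 ^ 2) ^ p) i x
      = p * (x 0 ^ 2 + x 1 ^ 2) ^ (p - 1) * (2 * x i) := by
  rw [pd1, (hasFDerivAt_Sp p hx).fderiv]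
  simp [D2_apply, mul_assoc]

lemma pd1_pd1 (p : ℝ) {x : Fin 2 → ℝ} (hx : 0 < x 0 ^ 2 + x 1 ^ 2) (i j : Fin 2) :
    pd1 (pd1 (fun y : Fin 2 → ℝ => (y 0 ^ 2 + y 1 ^ 2) ^ p) i) j x
      = p * (x 0 ^ 2 + x 1 ^ 2) ^ (p - 1) * (2 * (if i = j then (1:ℝ) else 0))
        + (2 * x i) * (p * ((p - 1) * (x 0 ^ 2 + x 1 ^ 2) ^ (p - 1 - 1) * (2 * x j))) := by
  have hcont : Continuous fun y : Fin 2 → ℝ => y 0 ^ 2 + y 1 ^ 2 := by continuity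
  have hopen : IsOpen {y : Fin 2 → ℝ | 0 < y 0 ^ 2 + y 1 ^ 2} :=
    isOpen_lt continuous_const hcont
  have hev : pd1 (fun y : Fin 2 → ℝ => (y 0 ^ 2 + y 1 ^ 2) ^ p) i
      =ᶠ[nhds x] fun y => p * (y 0 ^ 2 + y 1 ^ 2) ^ (p - 1) * (2 * y i) := by
    filter_upwards [hopen.mem_nhds hx] with y hy
    exact pd1_rpow p hy i
  have hc : HasFDerivAt (fun y : Fin 2 → ℝ => p * (y 0 ^ 2 + y 1 ^ 2) ^ (p - 1))
      (p • (((p - 1) * (x 0 ^ 2 + x 1 ^ 2) ^ (p - 1 - 1)) • D2 x)) x :=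
    (hasFDerivAt_Sp (p - 1) hx).const_mul p
  have hd : HasFDerivAt (fun y : Fin 2 → ℝ => 2 * y i)
      ((2:ℝ) • (ContinuousLinearMap.proj i : (Fin 2 → ℝ) →L[ℝ] ℝ)) x :=
    (ContinuousLinearMap.proj i : (Fin 2 → ℝ) →L[ℝ] ℝ).hasFDerivAt.const_mul 2
  have hmul := hc.mul hd
  rw [pd1, hev.fderiv_eq, HasFDerivAt.fderiv (f := fun y : Fin 2 → ℝ => p * (y 0 ^ 2 + y 1 ^ 2) ^ (p - 1) * (2 * y i)) hmul]
  fin_cases i <;> fin_cases j <;>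
    simp [D2, Pi.single_apply]

lemma pos_of_ne_zero {x : Fin 2 → ℝ} (hx : x ≠ 0) : 0 < x 0 ^ 2 + x 1 ^ 2 := by
  have h : x 0 ≠ 0 ∨ x 1 ≠ 0 := by
    by_contra h
    push_neg at h
    apply hx
    ext i
    fin_cases i <;> simp [h.1, h.2]
  rcases h with h | h
  · have h0 : 0 < x 0 ^ 2 := by positivity
    nlinarith [sq_nonneg (x 1)]
  · have h0 : 0 < x 1 ^ 2 := by positivity
    nlinarith [sq_nonneg (x 0)]

end SymphAux

open SymphAux in
/-- For `f_α(x₁,x₂) = (x₁² + x₂²)^{α/2}` on `ℝ² \ {0}`, the symphonic expression equals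
`α³(3α − 2)(x₁² + x₂²)^{(3α−4)/2}`; consequently `f_α` is symphonic on `ℝ² \ {0}`
iff `α = 0` or `α = 2/3`. -/
theorem symphonic_radial_powers (α : ℝ) :
    let f : (Fin 2 → ℝ) → ℝ := fun y => (y 0 ^ 2 + y 1 ^ 2) ^ (α / 2)
    (∀ x : Fin 2 → ℝ, x ≠ 0 →
        ∑ i, ∑ j, (pd1 (pd1 f i) i x * pd1 f j x ^ 2
            + 2 * pd1 f i x * pd1 f j x * pd1 (pd1 f i) j x)
          = α ^ 3 * (3 * α - 2) * (x 0 ^ 2 + x 1 ^ 2) ^ ((3 * α - 4) / 2))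
      ∧ ((∀ x : Fin 2 → ℝ, x ≠ 0 →
            ∑ i, ∑ j, (pd1 (pd1 f i) i x * pd1 f j x ^ 2
              + 2 * pd1 f i x * pd1 f j x * pd1 (pd1 f i) j x) = 0)
          ↔ α = 0 ∨ α = 2 / 3) := by
  intro f
  have key : ∀ x : Fin 2 → ℝ, x ≠ 0 →
      ∑ i, ∑ j, (pd1 (pd1 f i) i x * pd1 f j x ^ 2
          + 2 * pd1 f i x * pd1 f j x * pd1 (pd1 f i) j x)
        = α ^ 3 * (3 * α - 2) * (x 0 ^ 2 + x 1 ^ 2) ^ ((3 * α - 4) / 2) := by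
    intro x hx
    have hs : 0 < x 0 ^ 2 + x 1 ^ 2 := pos_of_ne_zero hx
    have hp1 : ∀ i, pd1 f i x
        = (α / 2) * (x 0 ^ 2 + x 1 ^ 2) ^ (α / 2 - 1) * (2 * x i) :=
      fun i => pd1_rpow (α / 2) hs i
    have hp2 : ∀ i j, pd1 (pd1 f i) j x
        = (α / 2) * (x 0 ^ 2 + x 1 ^ 2) ^ (α / 2 - 1) * (2 * (if i = j then (1:ℝ) else 0))
          + (2 * x i) * ((α / 2) * ((α / 2 - 1) * (x 0 ^ 2 + x 1 ^ 2) ^ (α / 2 - 1 - 1)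
              * (2 * x j))) :=
      fun i j => pd1_pd1 (α / 2) hs i j
    have hA : (x 0 ^ 2 + x 1 ^ 2) ^ (α / 2 - 1 - 1) * (x 0 ^ 2 + x 1 ^ 2)
        = (x 0 ^ 2 + x 1 ^ 2) ^ (α / 2 - 1) := by
      rw [← Real.rpow_add_one hs.ne']
      congr 1
      ring
    have hC : (x 0 ^ 2 + x 1 ^ 2) ^ (α / 2 - 1) * (x 0 ^ 2 + x 1 ^ 2) ^ (α / 2 - 1)
          * (x 0 ^ 2 + x 1 ^ 2) ^ (α / 2 - 1) * (x 0 ^ 2 + x 1 ^ 2)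
        = (x 0 ^ 2 + x 1 ^ 2) ^ ((3 * α - 4) / 2) := by
      rw [← Real.rpow_add hs, ← Real.rpow_add hs, ← Real.rpow_add_one hs.ne']
      congr 1
      ring
    simp only [Fin.sum_univ_two, hp1, hp2]
    norm_num
    set A := (x 0 ^ 2 + x 1 ^ 2) ^ (α / 2 - 1) with hAdef
    set B := (x 0 ^ 2 + x 1 ^ 2) ^ (α / 2 - 1 - 1) with hBdef
    set C := (x 0 ^ 2 + x 1 ^ 2) ^ ((3 * α - 4) / 2) with hCdef
    linear_combination ((3 * α - 6) * α ^ 3 * A * A * (x 0 ^ 2 + x 1 ^ 2)) * hA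
      + ((3 * α - 2) * α ^ 3) * hC
  refine ⟨key, ?_, ?_⟩
  · intro h
    set x : Fin 2 → ℝ := ![1, 0] with hxdef
    have hx : x ≠ 0 := by
      intro h0
      have := congrFun h0 0
      simp [hxdef] at this
    have h1 := h x hx
    rw [key x hx] at h1
    have hx0 : x 0 = 1 := rfl
    have hx1 : x 1 = 0 := rfl
    rw [hx0, hx1] at h1
    norm_num [Real.one_rpow] at h1
    rcases h1 with h1 | h1
    · left; exact h1
    · right; linarith
  · rintro (h | h) x hx
    · rw [key x hx, h]; ring
    · rw [key x hx, h]; norm_num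
end

section
/- Let φ : ℝ^m → ℝ^n be smooth. Then φ is a critical point of the symphonic energy, in the sense that for every smooth compactly supported v : ℝ^m → ℝ^n the derivative at t = 0 of t ↦ ∫_{ℝ^m}( ‖(φ+tv)^*h‖² − ‖φ^*h‖² ) dx vanishes, if and only if div σ_φ = 0 identically on ℝ^m. -/
open scoped BigOperators

/-- Partial derivative `∂φ/∂x_i` of a map `φ : ℝ^m → ℝ^n`. -/
noncomputable def pd {m n : ℕ} (φ : (Fin m → ℝ) → Fin n → ℝ) (i : Fin m) (x : Fin m → ℝ) :
    Fin n → ℝ :=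
  fderiv ℝ φ x (Pi.single i 1)

/-- Euclidean inner product on `ℝ^n`. -/
def inn {n : ℕ} (u v : Fin n → ℝ) : ℝ := ∑ k, u k * v k

open MeasureTheory Metric Function

lemma hone : (1:WithTop ℕ∞) ≤ ((⊤:ℕ∞):WithTop ℕ∞) := by exact_mod_cast le_top
lemma htop : ((⊤:ℕ∞):WithTop ℕ∞) + 1 ≤ ((⊤:ℕ∞):WithTop ℕ∞) := by
  exact_mod_cast le_top

variable {m n : ℕ}

lemma inn_comm (u v : Fin n → ℝ) : inn u v = inn v u := by
  unfold inn; exact Finset.sum_congr rfl fun k _ => mul_comm _ _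

@[simp] lemma inn_zero_right (u : Fin n → ℝ) : inn u 0 = 0 := by simp [inn]
@[simp] lemma inn_zero_left (u : Fin n → ℝ) : inn 0 u = 0 := by simp [inn]

lemma contDiff_pd {φ : (Fin m → ℝ) → Fin n → ℝ} (hφ : ContDiff ℝ (⊤:ℕ∞) φ) (i : Fin m) :
    ContDiff ℝ (⊤:ℕ∞) (pd φ i) :=
  (hφ.fderiv_right htop).clm_apply contDiff_const

lemma continuous_pd {φ : (Fin m → ℝ) → Fin n → ℝ} (hφ : ContDiff ℝ (⊤:ℕ∞) φ) (i : Fin m) :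
    Continuous (pd φ i) := (contDiff_pd hφ i).continuous

lemma continuous_inn {α : Type*} [TopologicalSpace α] {f g : α → Fin n → ℝ}
    (hf : Continuous f) (hg : Continuous g) : Continuous fun x => inn (f x) (g x) := by
  unfold inn
  exact continuous_finset_sum _ fun k _ =>
    ((continuous_apply k).comp hf).mul ((continuous_apply k).comp hg)

lemma contDiff_inn {f g : (Fin m → ℝ) → Fin n → ℝ}
    (hf : ContDiff ℝ (⊤:ℕ∞) f) (hg : ContDiff ℝ (⊤:ℕ∞) g) :
    ContDiff ℝ (⊤:ℕ∞) fun x => inn (f x) (g x) := by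
  unfold inn
  refine ContDiff.sum fun k _ => ContDiff.mul ?_ ?_
  · exact ((ContinuousLinearMap.proj k).contDiff).comp hf
  · exact ((ContinuousLinearMap.proj k).contDiff).comp hg

lemma pd_eq_zero_of_nmem {v : (Fin m → ℝ) → Fin n → ℝ} {x : Fin m → ℝ}
    (hx : x ∉ tsupport v) (i : Fin m) : pd v i x = 0 := by
  unfold pd
  rw [(notMem_tsupport_iff_eventuallyEq.mp hx).fderiv_eq]
  rw [show (0 : (Fin m → ℝ) → Fin n → ℝ) = fun _ => 0 from rfl, fderiv_const_apply]
  rfl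

lemma pd_add_smul {φ v : (Fin m → ℝ) → Fin n → ℝ} (hφ : ContDiff ℝ (⊤:ℕ∞) φ)
    (hv : ContDiff ℝ (⊤:ℕ∞) v) (t : ℝ) (i : Fin m) (x : Fin m → ℝ) :
    pd (fun y => φ y + t • v y) i x = pd φ i x + t • pd v i x := by
  unfold pd
  have h1 : DifferentiableAt ℝ φ x := (hφ.differentiable (by simp)) x
  have h2 : DifferentiableAt ℝ v x := (hv.differentiable (by simp)) x
  rw [fderiv_fun_add (g := fun y => t • v y) h1 (h2.const_smul t), fderiv_fun_const_smul h2 t]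
  rfl

lemma hasFDerivAt_eval {g : (Fin m → ℝ) → Fin n → ℝ} {x : Fin m → ℝ}
    (h : DifferentiableAt ℝ g x) (k : Fin n) :
    HasFDerivAt (fun y => g y k) ((ContinuousLinearMap.proj k).comp (fderiv ℝ g x)) x := by
  exact ((ContinuousLinearMap.proj k).hasFDerivAt.comp x h.hasFDerivAt : _)

lemma fderiv_inn {f g : (Fin m → ℝ) → Fin n → ℝ} {x : Fin m → ℝ}
    (hf : DifferentiableAt ℝ f x) (hg : DifferentiableAt ℝ g x) (w : Fin m → ℝ) :
    fderiv ℝ (fun y => inn (f y) (g y)) x w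
      = inn (fderiv ℝ f x w) (g x) + inn (f x) (fderiv ℝ g x w) := by
  have H : HasFDerivAt (fun y => inn (f y) (g y))
      (∑ k : Fin n, (f x k • ((ContinuousLinearMap.proj k).comp (fderiv ℝ g x))
        + g x k • ((ContinuousLinearMap.proj k).comp (fderiv ℝ f x)))) x := by
    unfold inn
    exact HasFDerivAt.fun_sum fun k _ => (hasFDerivAt_eval hf k).mul (hasFDerivAt_eval hg k)
  rw [H.fderiv]
  simp only [ContinuousLinearMap.sum_apply, ContinuousLinearMap.add_apply,
    ContinuousLinearMap.smul_apply, ContinuousLinearMap.coe_comp', Function.comp_apply,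
    ContinuousLinearMap.proj_apply, smul_eq_mul, inn, Finset.sum_add_distrib]
  rw [add_comm]
  congr 1 <;> exact Finset.sum_congr rfl fun k _ => mul_comm _ _


lemma inn_expand (t : ℝ) (P Q R S : Fin n → ℝ) :
    inn (P + t • Q) (R + t • S)
      = inn P R + t * (inn P S + inn Q R) + t^2 * inn Q S := by
  unfold inn
  rw [Finset.sum_congr rfl (fun k _ => show (P + t•Q) k * (R + t•S) k
    = P k * R k + t * (P k * S k + Q k * R k) + t^2 * (Q k * S k) from by
      simp only [Pi.add_apply, Pi.smul_apply, smul_eq_mul]; ring)]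
  simp only [Finset.sum_add_distrib, Finset.mul_sum, mul_add]

lemma inn_sum_smul_left {s : Finset (Fin m)} (c : Fin m → ℝ) (w : Fin m → Fin n → ℝ)
    (u : Fin n → ℝ) :
    inn (∑ j ∈ s, c j • w j) u = ∑ j ∈ s, c j * inn (w j) u := by
  unfold inn
  rw [Finset.sum_congr rfl (fun k _ => show (∑ j ∈ s, c j • w j) k * u k
      = ∑ j ∈ s, c j * (w j k * u k) from by
    simp only [Finset.sum_apply, Pi.smul_apply, smul_eq_mul, Finset.sum_mul, mul_assoc])]
  rw [Finset.sum_comm]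
  exact Finset.sum_congr rfl fun j _ => by rw [Finset.mul_sum]

lemma inn_sum_left {s : Finset (Fin m)} (w : Fin m → Fin n → ℝ) (u : Fin n → ℝ) :
    inn (∑ j ∈ s, w j) u = ∑ j ∈ s, inn (w j) u := by
  have := inn_sum_smul_left (s := s) (fun _ => (1:ℝ)) w u
  simpa using this

lemma inn_smul_right (s : ℝ) (u c : Fin n → ℝ) : inn u (s • c) = s * inn u c := by
  unfold inn
  simp only [Pi.smul_apply, smul_eq_mul, Finset.mul_sum]
  exact Finset.sum_congr rfl fun k _ => by ring

lemma div_int_zero (m : ℕ) (f : Fin m → (Fin m → ℝ) → ℝ)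
    (hf : ∀ j, ContDiff ℝ (⊤:ℕ∞) (f j)) (hsupp : ∀ j, HasCompactSupport (f j)) :
    ∫ x : Fin m → ℝ, ∑ j, fderiv ℝ (f j) x (Pi.single j 1) = 0 := by
  cases m with
  | zero => simp
  | succ k =>
    have hcpt : IsCompact (⋃ j, tsupport (f j)) := isCompact_iUnion fun j => (hsupp j).isCompact
    obtain ⟨R, hR⟩ := hcpt.isBounded.subset_closedBall 0
    set S := R ⊔ 0 with hS
    have hRS : (⋃ j, tsupport (f j)) ⊆ closedBall 0 S :=
      hR.trans (closedBall_subset_closedBall le_sup_left)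
    have hS0 : (0:ℝ) ≤ S := le_sup_right
    set a : Fin (k+1) → ℝ := fun _ => -(S+1) with ha
    set b : Fin (k+1) → ℝ := fun _ => (S+1) with hb
    have hab : a ≤ b := fun i => by simp only [ha, hb]; linarith
    have hout : ∀ x : Fin (k+1) → ℝ, x ∉ closedBall (0:Fin (k+1) → ℝ) S →
        ∀ j, fderiv ℝ (f j) x = 0 := by
      intro x hx j
      have hmem : x ∉ tsupport (f j) := fun h => hx (hRS (Set.mem_iUnion_of_mem j h))
      have h0 := notMem_tsupport_iff_eventuallyEq.mp hmem
      rw [h0.fderiv_eq]; exact fderiv_const_apply 0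
    have key := MeasureTheory.integral_divergence_of_hasFDerivAt_off_countable' a b hab f
      (fun j x => fderiv ℝ (f j) x) ∅ Set.countable_empty
      (fun i => ((hf i).continuous).continuousOn)
      (fun x _ i => ((hf i).differentiable (by simp) x).hasFDerivAt)
      (by
        apply ContinuousOn.integrableOn_compact isCompact_Icc
        exact (continuous_finset_sum _ fun i _ =>
          ((hf i).continuous_fderiv (by simp)).clm_apply continuous_const).continuousOn)
    have hface : ∀ (i : Fin (k+1)) (c : ℝ), |c| = S + 1 →
        ∀ x : Fin k → ℝ, f i (i.insertNth c x) = 0 := by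
      intro i c hc x
      set y : Fin (k+1) → ℝ := i.insertNth c x with hy
      apply image_eq_zero_of_notMem_tsupport
      intro hmem
      have h1 : y ∈ closedBall (0:Fin (k+1) → ℝ) S := hRS (Set.mem_iUnion_of_mem i hmem)
      rw [mem_closedBall_zero_iff] at h1
      have h2 : ‖y i‖ ≤ ‖y‖ := norm_le_pi_norm y i
      have h3 : y i = c := by simp [hy]
      rw [h3, Real.norm_eq_abs, hc] at h2
      linarith
    rw [show (∑ i : Fin (k+1),
        ((∫ (x : Fin k → ℝ) in Set.Icc (a ∘ i.succAbove) (b ∘ i.succAbove),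
            f i (i.insertNth (b i) x)) -
          ∫ (x : Fin k → ℝ) in Set.Icc (a ∘ i.succAbove) (b ∘ i.succAbove),
            f i (i.insertNth (a i) x))) = 0 from by
      apply Finset.sum_eq_zero; intro i _
      rw [setIntegral_congr_fun measurableSet_Icc (g := fun _ => (0:ℝ))
          (fun x _ => hface i (b i) (by simp only [hb]; rw [abs_of_nonneg] <;> linarith) x),
        setIntegral_congr_fun measurableSet_Icc (g := fun _ => (0:ℝ))
          (fun x _ => hface i (a i) (by simp only [ha]; rw [abs_of_nonpos] <;> linarith) x)]
      simp] at key
    rw [← key]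
    symm
    apply setIntegral_eq_integral_of_forall_compl_eq_zero
    intro x hx
    have hxball : x ∉ closedBall (0:Fin (k+1) → ℝ) S := by
      intro hball
      apply hx
      rw [mem_closedBall_zero_iff] at hball
      constructor <;> intro i <;>
        · have h2 : ‖x i‖ ≤ ‖x‖ := norm_le_pi_norm x i
          rw [Real.norm_eq_abs] at h2
          have := abs_le.mp (h2.trans hball)
          simp only [ha, hb]
          linarith [this.1, this.2]
    apply Finset.sum_eq_zero
    intro j _
    rw [hout x hxball j]
    rfl

noncomputable def coefA {m n : ℕ} (φ v : (Fin m → ℝ) → Fin n → ℝ) (x : Fin m → ℝ) : ℝ :=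
  ∑ i, ∑ j, 2 * inn (pd φ i x) (pd φ j x) *
    (inn (pd φ i x) (pd v j x) + inn (pd v i x) (pd φ j x))
noncomputable def coefB {m n : ℕ} (φ v : (Fin m → ℝ) → Fin n → ℝ) (x : Fin m → ℝ) : ℝ :=
  ∑ i, ∑ j, ((inn (pd φ i x) (pd v j x) + inn (pd v i x) (pd φ j x))^2
    + 2 * inn (pd φ i x) (pd φ j x) * inn (pd v i x) (pd v j x))
noncomputable def coefC {m n : ℕ} (φ v : (Fin m → ℝ) → Fin n → ℝ) (x : Fin m → ℝ) : ℝ :=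
  ∑ i, ∑ j, 2 * (inn (pd φ i x) (pd v j x) + inn (pd v i x) (pd φ j x)) * inn (pd v i x) (pd v j x)
noncomputable def coefD {m n : ℕ} (φ v : (Fin m → ℝ) → Fin n → ℝ) (x : Fin m → ℝ) : ℝ :=
  ∑ i, ∑ j, inn (pd v i x) (pd v j x)^2

variable {φ v : (Fin m → ℝ) → Fin n → ℝ}

lemma integrand_expand (hφ : ContDiff ℝ (⊤:ℕ∞) φ) (hv : ContDiff ℝ (⊤:ℕ∞) v)
    (t : ℝ) (x : Fin m → ℝ) :
    ((∑ i, ∑ j, inn (pd (fun y => φ y + t • v y) i x) (pd (fun y => φ y + t • v y) j x) ^ 2)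
      - ∑ i, ∑ j, inn (pd φ i x) (pd φ j x) ^ 2)
    = t * coefA φ v x + t^2 * coefB φ v x + t^3 * coefC φ v x + t^4 * coefD φ v x := by
  simp only [pd_add_smul hφ hv, inn_expand]
  unfold coefA coefB coefC coefD
  simp only [Finset.mul_sum, ← Finset.sum_add_distrib, ← Finset.sum_sub_distrib]
  exact Finset.sum_congr rfl fun i _ => Finset.sum_congr rfl fun j _ => by ring

lemma continuous_coef (hφ : ContDiff ℝ (⊤:ℕ∞) φ) (hv : ContDiff ℝ (⊤:ℕ∞) v) :
    Continuous (coefA φ v) ∧ Continuous (coefB φ v)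
    ∧ Continuous (coefC φ v) ∧ Continuous (coefD φ v) := by
  have cφφ : ∀ i j : Fin m, Continuous fun x => inn (pd φ i x) (pd φ j x) :=
    fun i j => continuous_inn (continuous_pd hφ i) (continuous_pd hφ j)
  have cφv : ∀ i j : Fin m, Continuous fun x => inn (pd φ i x) (pd v j x) :=
    fun i j => continuous_inn (continuous_pd hφ i) (continuous_pd hv j)
  have cvφ : ∀ i j : Fin m, Continuous fun x => inn (pd v i x) (pd φ j x) :=
    fun i j => continuous_inn (continuous_pd hv i) (continuous_pd hφ j)
  have cvv : ∀ i j : Fin m, Continuous fun x => inn (pd v i x) (pd v j x) :=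
    fun i j => continuous_inn (continuous_pd hv i) (continuous_pd hv j)
  refine ⟨?_, ?_, ?_, ?_⟩ <;> refine continuous_finset_sum _ fun i _ =>
    continuous_finset_sum _ fun j _ => ?_
  · exact ((continuous_const.mul (cφφ i j)).mul ((cφv i j).add (cvφ i j)))
  · exact (((cφv i j).add (cvφ i j)).pow 2).add
      ((continuous_const.mul (cφφ i j)).mul (cvv i j))
  · exact (continuous_const.mul ((cφv i j).add (cvφ i j))).mul (cvv i j)
  · exact (cvv i j).pow 2

lemma support_coef :
    (support (coefA φ v) ⊆ tsupport v) ∧ (support (coefB φ v) ⊆ tsupport v)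
    ∧ (support (coefC φ v) ⊆ tsupport v) ∧ (support (coefD φ v) ⊆ tsupport v) := by
  refine ⟨?_, ?_, ?_, ?_⟩ <;>
  · intro x hx
    by_contra hmem
    apply hx
    simp [coefA, coefB, coefC, coefD, pd_eq_zero_of_nmem hmem]

lemma integrable_coef (hφ : ContDiff ℝ (⊤:ℕ∞) φ) (hv : ContDiff ℝ (⊤:ℕ∞) v)
    (hvs : HasCompactSupport v) :
    Integrable (coefA φ v) ∧ Integrable (coefB φ v)
    ∧ Integrable (coefC φ v) ∧ Integrable (coefD φ v) := by
  obtain ⟨c1, c2, c3, c4⟩ := continuous_coef hφ hv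
  obtain ⟨s1, s2, s3, s4⟩ := support_coef (φ := φ) (v := v)
  exact ⟨c1.integrable_of_hasCompactSupport (hvs.mono' s1),
    c2.integrable_of_hasCompactSupport (hvs.mono' s2),
    c3.integrable_of_hasCompactSupport (hvs.mono' s3),
    c4.integrable_of_hasCompactSupport (hvs.mono' s4)⟩

lemma F_hasDerivAt (hφ : ContDiff ℝ (⊤:ℕ∞) φ) (hv : ContDiff ℝ (⊤:ℕ∞) v)
    (hvs : HasCompactSupport v) :
    HasDerivAt (fun t : ℝ => ∫ x : Fin m → ℝ,
        ((∑ i, ∑ j,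
            inn (pd (fun y => φ y + t • v y) i x) (pd (fun y => φ y + t • v y) j x) ^ 2)
          - ∑ i, ∑ j, inn (pd φ i x) (pd φ j x) ^ 2)) (∫ x : Fin m → ℝ, coefA φ v x) 0 := by
  obtain ⟨i1, i2, i3, i4⟩ := integrable_coef hφ hv hvs
  have hF : (fun t : ℝ => ∫ x : Fin m → ℝ,
      ((∑ i, ∑ j,
          inn (pd (fun y => φ y + t • v y) i x) (pd (fun y => φ y + t • v y) j x) ^ 2)
        - ∑ i, ∑ j, inn (pd φ i x) (pd φ j x) ^ 2))
      = fun t : ℝ => t * (∫ x, coefA φ v x) + t^2 * (∫ x, coefB φ v x)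
          + t^3 * (∫ x, coefC φ v x) + t^4 * (∫ x, coefD φ v x) := by
    funext t
    rw [show (fun x : Fin m → ℝ =>
        ((∑ i, ∑ j,
            inn (pd (fun y => φ y + t • v y) i x) (pd (fun y => φ y + t • v y) j x) ^ 2)
          - ∑ i, ∑ j, inn (pd φ i x) (pd φ j x) ^ 2))
        = fun x => t * coefA φ v x + t^2 * coefB φ v x + t^3 * coefC φ v x + t^4 * coefD φ v x
      from funext fun x => integrand_expand hφ hv t x]
    rw [integral_add (f := fun x => t * coefA φ v x + t^2 * coefB φ v x + t^3 * coefC φ v x)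
        (g := fun x => t^4 * coefD φ v x)
        (((i1.const_mul t).add (i2.const_mul (t^2))).add (i3.const_mul (t^3)))
        (i4.const_mul (t^4)),
      integral_add (f := fun x => t * coefA φ v x + t^2 * coefB φ v x)
        (g := fun x => t^3 * coefC φ v x)
        ((i1.const_mul t).add (i2.const_mul (t^2))) (i3.const_mul (t^3)),
      integral_add (f := fun x => t * coefA φ v x) (g := fun x => t^2 * coefB φ v x)
        (i1.const_mul t) (i2.const_mul (t^2)),
      MeasureTheory.integral_const_mul, MeasureTheory.integral_const_mul,
      MeasureTheory.integral_const_mul, MeasureTheory.integral_const_mul]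
  rw [hF]
  have h1 : HasDerivAt (fun t : ℝ => t * (∫ x, coefA φ v x)) (∫ x, coefA φ v x) 0 := by
    simpa using (hasDerivAt_id (0:ℝ)).mul_const (∫ x, coefA φ v x)
  have h2 : HasDerivAt (fun t : ℝ => t^2 * (∫ x, coefB φ v x)) 0 0 := by
    simpa using (hasDerivAt_pow 2 (0:ℝ)).mul_const (∫ x, coefB φ v x)
  have h3 : HasDerivAt (fun t : ℝ => t^3 * (∫ x, coefC φ v x)) 0 0 := by
    simpa using (hasDerivAt_pow 3 (0:ℝ)).mul_const (∫ x, coefC φ v x)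
  have h4 : HasDerivAt (fun t : ℝ => t^4 * (∫ x, coefD φ v x)) 0 0 := by
    simpa using (hasDerivAt_pow 4 (0:ℝ)).mul_const (∫ x, coefD φ v x)
  have := ((h1.add h2).add h3).add h4
  simp only [add_zero] at this
  exact this

noncomputable def sig {m n : ℕ} (φ : (Fin m → ℝ) → Fin n → ℝ) (i : Fin m)
    (y : Fin m → ℝ) : Fin n → ℝ :=
  ∑ j, inn (pd φ i y) (pd φ j y) • pd φ j y

lemma contDiff_sig (hφ : ContDiff ℝ (⊤:ℕ∞) φ) (i : Fin m) :
    ContDiff ℝ (⊤:ℕ∞) (sig φ i) := by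
  unfold sig
  exact ContDiff.sum fun j _ =>
    (contDiff_inn (contDiff_pd hφ i) (contDiff_pd hφ j)).smul (contDiff_pd hφ j)

lemma coefA_eq (x : Fin m → ℝ) :
    coefA φ v x = 4 * ∑ i, inn (sig φ i x) (pd v i x) := by
  unfold sig
  simp only [inn_sum_smul_left]
  have e1 : (∑ i, ∑ j, inn (pd φ i x) (pd φ j x) * inn (pd φ i x) (pd v j x))
      = ∑ i, ∑ j, inn (pd φ i x) (pd φ j x) * inn (pd φ j x) (pd v i x) := by
    rw [Finset.sum_comm]
    exact Finset.sum_congr rfl fun i _ => Finset.sum_congr rfl fun j _ => by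
      rw [inn_comm (pd φ j x) (pd φ i x)]
  have e2 : (∑ i, ∑ j, inn (pd φ i x) (pd φ j x) * inn (pd v i x) (pd φ j x))
      = ∑ i, ∑ j, inn (pd φ i x) (pd φ j x) * inn (pd φ j x) (pd v i x) := by
    exact Finset.sum_congr rfl fun i _ => Finset.sum_congr rfl fun j _ => by
      rw [inn_comm (pd v i x) (pd φ j x)]
  have split : coefA φ v x
      = (∑ i, ∑ j, inn (pd φ i x) (pd φ j x) * inn (pd φ i x) (pd v j x)) * 2
        + (∑ i, ∑ j, inn (pd φ i x) (pd φ j x) * inn (pd v i x) (pd φ j x)) * 2 := by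
    unfold coefA
    simp only [Finset.sum_mul, ← Finset.sum_add_distrib]
    exact Finset.sum_congr rfl fun i _ => Finset.sum_congr rfl fun j _ => by ring
  rw [split, e1, e2]
  ring_nf

lemma ibp (hφ : ContDiff ℝ (⊤:ℕ∞) φ) (hv : ContDiff ℝ (⊤:ℕ∞) v)
    (hvs : HasCompactSupport v) :
    ∫ x : Fin m → ℝ, coefA φ v x
      = -(4 * ∫ x : Fin m → ℝ, inn (∑ i, pd (sig φ i) i x) (v x)) := by
  have hsigC : ∀ i, ContDiff ℝ (⊤:ℕ∞) (sig φ i) := contDiff_sig hφ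
  have hG : ∀ i, ContDiff ℝ (⊤:ℕ∞) (fun y => inn (sig φ i y) (v y)) :=
    fun i => contDiff_inn (hsigC i) hv
  have hGsupp : ∀ i : Fin m, support (fun y => inn (sig φ i y) (v y)) ⊆ tsupport v := by
    intro i y hy
    apply subset_tsupport
    intro h0
    apply hy
    simp [h0]
  have hGs : ∀ i, HasCompactSupport (fun y => inn (sig φ i y) (v y)) :=
    fun i => hvs.mono' (hGsupp i)
  have h0 : ∫ x : Fin m → ℝ, ∑ i, fderiv ℝ (fun y => inn (sig φ i y) (v y)) x (Pi.single i 1)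
      = 0 := div_int_zero m (fun i y => inn (sig φ i y) (v y)) hG hGs
  have hpt : ∀ x : Fin m → ℝ,
      (∑ i, fderiv ℝ (fun y => inn (sig φ i y) (v y)) x (Pi.single i 1))
      = inn (∑ i, pd (sig φ i) i x) (v x) + ∑ i, inn (sig φ i x) (pd v i x) := by
    intro x
    rw [inn_sum_left, ← Finset.sum_add_distrib]
    refine Finset.sum_congr rfl fun i _ => ?_
    rw [fderiv_inn ((hsigC i).differentiable (by simp) x) ((hv.differentiable (by simp)) x)]
    rfl
  rw [show (fun x : Fin m → ℝ =>
      ∑ i, fderiv ℝ (fun y => inn (sig φ i y) (v y)) x (Pi.single i 1))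
      = fun x => inn (∑ i, pd (sig φ i) i x) (v x) + ∑ i, inn (sig φ i x) (pd v i x)
    from funext hpt] at h0
  have hdivcont : Continuous fun x : Fin m → ℝ => inn (∑ i, pd (sig φ i) i x) (v x) :=
    continuous_inn (continuous_finset_sum _ fun i _ => continuous_pd (hsigC i) i) hv.continuous
  have hdivsupp : support (fun x : Fin m → ℝ => inn (∑ i, pd (sig φ i) i x) (v x))
      ⊆ tsupport v := by
    intro y hy
    apply subset_tsupport
    intro hzero
    apply hy
    simp [hzero]
  have int1 : Integrable (fun x : Fin m → ℝ => inn (∑ i, pd (sig φ i) i x) (v x)) :=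
    hdivcont.integrable_of_hasCompactSupport (hvs.mono' hdivsupp)
  have hscont : Continuous fun x : Fin m → ℝ => ∑ i, inn (sig φ i x) (pd v i x) :=
    continuous_finset_sum _ fun i _ =>
      continuous_inn ((hsigC i).continuous) (continuous_pd hv i)
  have hssupp : support (fun x : Fin m → ℝ => ∑ i, inn (sig φ i x) (pd v i x))
      ⊆ tsupport v := by
    intro y hy
    by_contra hmem
    apply hy
    simp [pd_eq_zero_of_nmem hmem]
  have int2 : Integrable (fun x : Fin m → ℝ => ∑ i, inn (sig φ i x) (pd v i x)) :=
    hscont.integrable_of_hasCompactSupport (hvs.mono' hssupp)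
  rw [integral_add int1 int2] at h0
  have hA : ∫ x : Fin m → ℝ, coefA φ v x
      = 4 * ∫ x : Fin m → ℝ, ∑ i, inn (sig φ i x) (pd v i x) := by
    rw [show (fun x : Fin m → ℝ => coefA φ v x)
        = fun x => 4 * ∑ i, inn (sig φ i x) (pd v i x) from funext fun x => coefA_eq x,
      MeasureTheory.integral_const_mul]
  rw [hA]
  linarith

lemma fundamental (g : (Fin m → ℝ) → Fin n → ℝ) (hg : Continuous g)
    (h : ∀ v : (Fin m → ℝ) → Fin n → ℝ, ContDiff ℝ (⊤:ℕ∞) v → HasCompactSupport v →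
      ∫ x : Fin m → ℝ, inn (g x) (v x) = 0) (x₀ : Fin m → ℝ) : g x₀ = 0 := by
  by_contra hc
  set c := g x₀ with hcdef
  have hk : ∃ k, c k ≠ 0 := Function.ne_iff.mp hc
  have hcc : 0 < inn c c := by
    obtain ⟨k, hk⟩ := hk
    exact Finset.sum_pos' (fun k _ => mul_self_nonneg _)
      ⟨k, Finset.mem_univ k, mul_self_pos.2 hk⟩
  have hgc : Continuous fun y => inn (g y) c := continuous_inn hg continuous_const
  have hopen : IsOpen {y : Fin m → ℝ | 0 < inn (g y) c} := isOpen_lt continuous_const hgc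
  obtain ⟨ε, hε, hball⟩ := Metric.isOpen_iff.mp hopen x₀ hcc
  set b : ContDiffBump x₀ := ⟨ε/2, ε, half_pos hε, half_lt_self hε⟩ with hbdef
  set v : (Fin m → ℝ) → Fin n → ℝ := fun y => b y • c with hvdef
  have hvC : ContDiff ℝ (⊤:ℕ∞) v := b.contDiff.smul contDiff_const
  have hvsupp : support v ⊆ tsupport ⇑b := by
    intro y hy
    apply subset_tsupport
    intro h0
    apply hy
    simp [hvdef, h0]
  have hvs : HasCompactSupport v := b.hasCompactSupport.mono' hvsupp
  have hint := h v hvC hvs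
  have hrw : (fun x : Fin m → ℝ => inn (g x) (v x)) = fun x => b x * inn (g x) c :=
    funext fun x => inn_smul_right (b x) (g x) c
  rw [hrw] at hint
  have hnonneg : ∀ y, 0 ≤ b y * inn (g y) c := by
    intro y
    by_cases hy : y ∈ ball x₀ ε
    · exact mul_nonneg b.nonneg (le_of_lt (hball hy))
    · have : b y = 0 := by
        have : y ∉ support ⇑b := by rw [b.support_eq]; exact hy
        simpa [mem_support, not_not] using this
      simp [this]
  have hintg : Integrable (fun y : Fin m → ℝ => b y * inn (g y) c) := by
    apply Continuous.integrable_of_hasCompactSupport (b.continuous.mul hgc)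
    apply b.hasCompactSupport.mono'
    intro y hy
    apply subset_tsupport
    intro h0
    apply hy
    simp [h0]
  have hpos : 0 < ∫ y : Fin m → ℝ, b y * inn (g y) c := by
    rw [integral_pos_iff_support_of_nonneg hnonneg hintg]
    have hsub : ball x₀ (ε/2) ⊆ support fun y => b y * inn (g y) c := by
      intro y hy
      have h1 : b y = 1 := b.one_of_mem_closedBall (ball_subset_closedBall hy)
      have h2 : 0 < inn (g y) c := hball (ball_subset_ball (by linarith) hy)
      simp only [mem_support, h1, one_mul]
      exact ne_of_gt h2
    exact lt_of_lt_of_le (measure_ball_pos volume x₀ (half_pos hε)) (measure_mono hsub)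
  rw [hint] at hpos
  exact lt_irrefl 0 hpos


/-- A smooth map `φ : ℝ^m → ℝ^n` is a critical point of the symphonic energy (the first
variation along every smooth compactly supported `v` vanishes at `t = 0`) if and only if
`div σ_φ = 0` identically on `ℝ^m`. -/
theorem symphonic_iff_critical (m n : ℕ) (φ : (Fin m → ℝ) → Fin n → ℝ)
    (hφ : ContDiff ℝ (⊤ : ℕ∞) φ) :
    (∀ v : (Fin m → ℝ) → Fin n → ℝ, ContDiff ℝ (⊤ : ℕ∞) v → HasCompactSupport v →
        HasDerivAt (fun t : ℝ => ∫ x : Fin m → ℝ,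
            ((∑ i, ∑ j,
                inn (pd (fun y => φ y + t • v y) i x) (pd (fun y => φ y + t • v y) j x) ^ 2)
              - ∑ i, ∑ j, inn (pd φ i x) (pd φ j x) ^ 2)) 0 0)
      ↔ ∀ x : Fin m → ℝ,
          (∑ i, pd (fun y => ∑ j, inn (pd φ i y) (pd φ j y) • pd φ j y) i x) = 0 := by
  constructor
  · intro hcrit
    have hdivcont : Continuous fun x : Fin m → ℝ => ∑ i, pd (sig φ i) i x :=
      continuous_finset_sum _ fun i _ => continuous_pd (contDiff_sig hφ i) i
    have hzero : ∀ v : (Fin m → ℝ) → Fin n → ℝ, ContDiff ℝ (⊤:ℕ∞) v → HasCompactSupport v →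
        ∫ x : Fin m → ℝ, inn (∑ i, pd (sig φ i) i x) (v x) = 0 := by
      intro v hv hvs
      have h3 : ∫ x : Fin m → ℝ, coefA φ v x = 0 :=
        (F_hasDerivAt hφ hv hvs).unique (hcrit v hv hvs)
      rw [ibp hφ hv hvs] at h3
      linarith
    intro x
    exact fundamental (fun x => ∑ i, pd (sig φ i) i x) hdivcont hzero x
  · intro hdiv v hv hvs
    have h3 : ∫ x : Fin m → ℝ, coefA φ v x = 0 := by
      rw [ibp hφ hv hvs]
      rw [show (fun x : Fin m → ℝ => inn (∑ i, pd (sig φ i) i x) (v x)) = fun _ => (0:ℝ) from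
        funext fun x => by
          rw [show (∑ i, pd (sig φ i) i x) = 0 from hdiv x]
          simp]
      rw [integral_zero]
      ring
    have h4 := F_hasDerivAt hφ hv hvs
    rw [h3] at h4
    exact h4
end
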